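/- arXiv:2008.10195 — 2 statements merged into one kernel-verified Lean document; each statement's English description precedes it below -/
import Mathlib

section
/- Let ψ, φ, f₁, f₂, h₁ be as follows: ψ holomorphic on the right half plane H, f₂ holomorphic, φ : H → H differentiable, f₁ = h₁ + conj(g₁) harmonic with h₁'g₁' = -1, and suppose f₁(ψ(ζ)) = f₂(φ(ζ)) on H with f₂'(φ(ζ)) ≠ 0 and ψ'(ζ) ≠ 0. Then ψ'(ζ)h₁'(ψ(ζ)) = φ_ζ(ζ)f₂'(φ(ζ)) and -conj(ψ'(ζ)/h₁'(ψ(ζ))) = φ_{ζ̄}(ζ)f₂'(φ(ζ)), and consequently |φ_{ζ̄}(ζ)/φ_ζ(ζ)| = 1/|h₁'(ψ(ζ))|². -/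
open Complex

/-- Wirtinger derivative `∂/∂ζ` of a real-differentiable map `φ : ℂ → ℂ`. -/
noncomputable def wirtD (φ : ℂ → ℂ) (z : ℂ) : ℂ :=
  (fderiv ℝ φ z 1 - Complex.I * fderiv ℝ φ z Complex.I) / 2

/-- Wirtinger derivative `∂/∂ζ̄` of a real-differentiable map `φ : ℂ → ℂ`. -/
noncomputable def wirtDbar (φ : ℂ → ℂ) (z : ℂ) : ℂ :=
  (fderiv ℝ φ z 1 + Complex.I * fderiv ℝ φ z Complex.I) / 2

/-- Chain-rule identities for `f₁(ψ(ζ)) = f₂(φ(ζ))` and the resulting dilatation formula. -/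
theorem stmt7 (ψ φ f₂ h₁ g₁ : ℂ → ℂ)
    (H : Set ℂ) (hH : H = {z : ℂ | 0 < z.re})
    (hψ : DifferentiableOn ℂ ψ H) (hf₂ : Differentiable ℂ f₂)
    (hh₁ : Differentiable ℂ h₁) (hg₁ : Differentiable ℂ g₁)
    (hφmap : Set.MapsTo φ H H) (hφdiff : ∀ ζ ∈ H, DifferentiableAt ℝ φ ζ)
    (hW : ∀ z : ℂ, deriv h₁ z * deriv g₁ z = -1)
    (hcomp : ∀ ζ ∈ H, h₁ (ψ ζ) + (starRingEnd ℂ) (g₁ (ψ ζ)) = f₂ (φ ζ))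
    (hne : ∀ ζ ∈ H, deriv f₂ (φ ζ) ≠ 0) (hψ' : ∀ ζ ∈ H, deriv ψ ζ ≠ 0) :
    ∀ ζ ∈ H,
      deriv ψ ζ * deriv h₁ (ψ ζ) = wirtD φ ζ * deriv f₂ (φ ζ) ∧
      -(starRingEnd ℂ) (deriv ψ ζ / deriv h₁ (ψ ζ)) = wirtDbar φ ζ * deriv f₂ (φ ζ) ∧
      ‖wirtDbar φ ζ / wirtD φ ζ‖ = 1 / (‖deriv h₁ (ψ ζ)‖) ^ 2 := by
  intro ζ hζ
  have hHopen : IsOpen H := by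
    rw [hH]; exact isOpen_lt continuous_const Complex.continuous_re
  have hψζ : DifferentiableAt ℂ ψ ζ := hψ.differentiableAt (hHopen.mem_nhds hζ)
  set A := deriv h₁ (ψ ζ) * deriv ψ ζ with hA
  set B := deriv g₁ (ψ ζ) * deriv ψ ζ with hB
  set c := deriv f₂ (φ ζ) with hc
  have hcne : c ≠ 0 := hne ζ hζ
  have hψne : deriv ψ ζ ≠ 0 := hψ' ζ hζ
  have hh₁ne : deriv h₁ (ψ ζ) ≠ 0 := by
    intro h
    have := hW (ψ ζ)
    rw [h, zero_mul] at this
    exact (by norm_num : (0:ℂ) ≠ -1) this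
  -- derivatives of compositions
  have hd1 : HasDerivAt (fun z => h₁ (ψ z)) A ζ :=
    (hh₁ (ψ ζ)).hasDerivAt.comp ζ hψζ.hasDerivAt
  have hd2 : HasDerivAt (fun z => g₁ (ψ z)) B ζ :=
    (hg₁ (ψ ζ)).hasDerivAt.comp ζ hψζ.hasDerivAt
  have hF : HasFDerivAt (fun z => h₁ (ψ z) + (starRingEnd ℂ) (g₁ (ψ z)))
      ((((1 : ℂ →L[ℂ] ℂ).smulRight A).restrictScalars ℝ) +
        ((Complex.conjCLE.toContinuousLinearMap).comp
          (((1 : ℂ →L[ℂ] ℂ).smulRight B).restrictScalars ℝ))) ζ := by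
    refine (hd1.hasFDerivAt.restrictScalars ℝ).add ?_
    exact (Complex.conjCLE.toContinuousLinearMap.hasFDerivAt).comp ζ
      (hd2.hasFDerivAt.restrictScalars ℝ)
  have hG : HasFDerivAt (fun z => f₂ (φ z))
      (((((1 : ℂ →L[ℂ] ℂ).smulRight c).restrictScalars ℝ)).comp (fderiv ℝ φ ζ)) ζ :=
    ((hf₂ (φ ζ)).hasDerivAt.hasFDerivAt.restrictScalars ℝ).comp ζ (hφdiff ζ hζ).hasFDerivAt
  have heq : (fun z => h₁ (ψ z) + (starRingEnd ℂ) (g₁ (ψ z))) =ᶠ[nhds ζ]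
      (fun z => f₂ (φ z)) :=
    Filter.eventuallyEq_of_mem (hHopen.mem_nhds hζ) (fun z hz => hcomp z hz)
  have hF' := hF.congr_of_eventuallyEq heq.symm
  have hL := hF'.unique hG
  have key : ∀ v : ℂ, v * A + (starRingEnd ℂ) (v * B) = fderiv ℝ φ ζ v * c := by
    intro v
    have := congrArg (fun L => L v) hL
    simpa using this
  have e1 := key 1
  have eI := key Complex.I
  simp only [one_mul, map_mul, Complex.conj_I, map_one] at e1 eI
  set u1 := fderiv ℝ φ ζ 1 with hu1
  set uI := fderiv ℝ φ ζ Complex.I with huI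
  have hI2 : Complex.I * Complex.I = -1 := Complex.I_mul_I
  have k1 : wirtD φ ζ * c = A := by
    simp only [wirtD, ← hu1, ← huI]
    field_simp
    linear_combination -e1 + Complex.I * eI + ((starRingEnd ℂ) B - A) * hI2
  have k2 : wirtDbar φ ζ * c = (starRingEnd ℂ) B := by
    simp only [wirtDbar, ← hu1, ← huI]
    field_simp
    linear_combination -e1 - Complex.I * eI + (A - (starRingEnd ℂ) B) * hI2
  have hg₁val : deriv g₁ (ψ ζ) = -1 / deriv h₁ (ψ ζ) := by
    field_simp
    linear_combination hW (ψ ζ)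
  refine ⟨?_, ?_, ?_⟩
  · rw [k1, hA]; ring
  · rw [k2, hB, hg₁val, map_mul]
    rw [map_div₀]
    simp [map_div₀]
    field_simp
  · have habsA : ‖A‖ = ‖deriv h₁ (ψ ζ)‖ * ‖deriv ψ ζ‖ :=
      norm_mul _ _
    have habsB : ‖(starRingEnd ℂ) B‖ = ‖deriv g₁ (ψ ζ)‖ * ‖deriv ψ ζ‖ := by
      rw [Complex.norm_conj]; exact norm_mul _ _
    have hdiv : wirtDbar φ ζ / wirtD φ ζ = (starRingEnd ℂ) B / A := by
      rw [← k1, ← k2, mul_div_mul_right _ _ hcne]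
    rw [hdiv, norm_div, habsA, habsB]
    have hprod : ‖deriv h₁ (ψ ζ)‖ * ‖deriv g₁ (ψ ζ)‖ = 1 := by
      rw [← norm_mul, hW (ψ ζ)]; simp
    have hane : ‖deriv h₁ (ψ ζ)‖ ≠ 0 := norm_ne_zero_iff.mpr hh₁ne
    have hpne : ‖deriv ψ ζ‖ ≠ 0 := norm_ne_zero_iff.mpr hψne
    field_simp
    linear_combination hprod
end

section
/- Let ψ be a conformal (injective holomorphic) map from the right half plane H onto a domain P ⊆ H with ψ(∞) = ∞ (i.e., ψ(ζ) → ∞ as ζ → ∞). Then for each β < π/2 there exists c ≥ 0 such that ψ'(ζ) → c uniformly as ζ → ∞ in the sector {|arg ζ| ≤ β}, and moreover ψ(ζ)/ζ → c in the same sector. -/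
open Complex Filter Metric Set

noncomputable def Complex.abs : AbsoluteValue ℂ ℝ := IsAbsoluteValue.toAbsoluteValue (norm : ℂ → ℝ)

lemma Complex.abs_apply (z : ℂ) : Complex.abs z = ‖z‖ := rfl

lemma Complex.norm_eq_abs (z : ℂ) : ‖z‖ = Complex.abs z := rfl

lemma Complex.sq_abs (z : ℂ) : Complex.abs z ^ 2 = Complex.normSq z := Complex.sq_norm z

lemma Complex.abs_ofReal (r : ℝ) : Complex.abs (r : ℂ) = |r| := by
  simp [Complex.abs_apply]

lemma Complex.abs_conj (z : ℂ) : Complex.abs ((starRingEnd ℂ) z) = Complex.abs z := by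
  simp [Complex.abs_apply]

@[continuity]
lemma Complex.continuous_abs : Continuous Complex.abs := continuous_norm

lemma Complex.re_le_abs (z : ℂ) : z.re ≤ Complex.abs z := Complex.re_le_norm z

lemma Complex.abs_le_abs_of_mapsTo_ball_self {f : ℂ → ℂ} (hd : DifferentiableOn ℂ f (ball 0 1))
    (h_maps : MapsTo f (ball 0 1) (ball 0 1)) (h₀ : f 0 = 0) {z : ℂ} (hz : Complex.abs z < 1) :
    Complex.abs (f z) ≤ Complex.abs z :=
  Complex.norm_le_norm_of_mapsTo_ball hd (h_maps.mono_right ball_subset_closedBall) h₀ hz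

lemma aux_normSq_id (a b : ℂ) :
    Complex.normSq (a + (starRingEnd ℂ) b) - Complex.normSq (a - b) = 4 * a.re * b.re := by
  simp [Complex.normSq_apply, Complex.add_re, Complex.add_im, Complex.sub_re, Complex.sub_im]
  ring

lemma aux_abs_ne (a b : ℂ) (ha : 0 < a.re) (hb : 0 < b.re) : a + (starRingEnd ℂ) b ≠ 0 := by
  intro h
  have : (a + (starRingEnd ℂ) b).re = 0 := by rw [h]; simp
  simp [Complex.add_re] at this
  linarith

lemma aux_abs_lt (a b : ℂ) (ha : 0 < a.re) (hb : 0 < b.re) :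
    Complex.abs (a - b) < Complex.abs (a + (starRingEnd ℂ) b) := by
  have h1 := aux_normSq_id a b
  have h2 := Complex.sq_abs (a - b)
  have h3 := Complex.sq_abs (a + (starRingEnd ℂ) b)
  nlinarith [Complex.abs.nonneg (a - b), Complex.abs.nonneg (a + (starRingEnd ℂ) b)]

lemma aux_cayley_re (ξ z : ℂ) :
    ((ξ + z * (starRingEnd ℂ) ξ) / (1 - z)).re
      = ξ.re * (1 - Complex.normSq z) / Complex.normSq (1 - z) := by
  rw [Complex.div_re]
  simp [Complex.normSq_apply, Complex.add_re, Complex.add_im, Complex.sub_re, Complex.sub_im,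
    Complex.mul_re, Complex.mul_im]
  ring

/-- Two-point Schwarz–Pick inequality for holomorphic self-maps of the right half plane. -/
lemma sp2 {f : ℂ → ℂ} (hf : DifferentiableOn ℂ f {z : ℂ | 0 < z.re})
    (hm : Set.MapsTo f {z : ℂ | 0 < z.re} {z : ℂ | 0 < z.re})
    {ζ ξ : ℂ} (hζ : 0 < ζ.re) (hξ : 0 < ξ.re) :
    Complex.abs (f ζ - f ξ) * Complex.abs (ζ + (starRingEnd ℂ) ξ)
      ≤ Complex.abs (ζ - ξ) * Complex.abs (f ζ + (starRingEnd ℂ) (f ξ)) := by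
  set H : Set ℂ := {z : ℂ | 0 < z.re} with hH
  have hfξ : 0 < (f ξ).re := hm hξ
  have hfζ : 0 < (f ζ).re := hm hζ
  set a := f ξ with ha
  set m : ℂ → ℂ := fun z => (ξ + z * (starRingEnd ℂ) ξ) / (1 - z) with hmdef
  set A : ℂ → ℂ := fun w => (w - a) / (w + (starRingEnd ℂ) a) with hAdef
  have hm_mem : ∀ z ∈ ball (0:ℂ) 1, m z ∈ H := by
    intro z hz
    rw [mem_ball_zero_iff] at hz
    have hz' : Complex.abs z < 1 := by rwa [← Complex.norm_eq_abs]
    have h1 : Complex.normSq z < 1 := by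
      rw [← Complex.sq_abs]; nlinarith [Complex.abs.nonneg z]
    have h3 : (1:ℂ) - z ≠ 0 := by
      intro h
      have : z = 1 := by linear_combination -h
      rw [this] at hz'; simp at hz'
    have h4 : 0 < Complex.normSq (1 - z) := Complex.normSq_pos.2 h3
    show 0 < (m z).re
    rw [hmdef]; simp only
    rw [aux_cayley_re]
    exact div_pos (mul_pos hξ (by linarith)) h4
  have hm_diff : DifferentiableOn ℂ m (ball (0:ℂ) 1) := by
    apply DifferentiableOn.div
    · exact (differentiableOn_const _).add (differentiableOn_id.mul (differentiableOn_const _))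
    · exact (differentiableOn_const _).sub differentiableOn_id
    · intro z hz
      rw [mem_ball_zero_iff] at hz
      intro h
      have : z = 1 := by linear_combination -h
      rw [this] at hz; norm_num at hz
  have hA_mem : ∀ w ∈ H, A w ∈ ball (0:ℂ) 1 := by
    intro w hw
    have hw' : 0 < w.re := hw
    have hden : w + (starRingEnd ℂ) a ≠ 0 := aux_abs_ne w a hw' hfξ
    have hpos : 0 < Complex.abs (w + (starRingEnd ℂ) a) := Complex.abs.pos hden
    have : Complex.abs (A w) < 1 := by
      rw [hAdef]; simp only
      rw [map_div₀, div_lt_one hpos]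
      exact aux_abs_lt w a hw' hfξ
    rwa [mem_ball_zero_iff, Complex.norm_eq_abs]
  have hA_diff : ∀ w ∈ H, DifferentiableAt ℂ A w := by
    intro w hw
    apply DifferentiableAt.div
    · exact (differentiableAt_id.sub (differentiableAt_const _))
    · exact (differentiableAt_id.add (differentiableAt_const _))
    · exact aux_abs_ne w a hw hfξ
  set F : ℂ → ℂ := fun z => A (f (m z)) with hFdef
  have hopen : IsOpen H := isOpen_lt continuous_const Complex.continuous_re
  have hF_diff : DifferentiableOn ℂ F (ball (0:ℂ) 1) := by
    intro z hz
    have h1 : DifferentiableWithinAt ℂ m (ball (0:ℂ) 1) z := hm_diff z hz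
    have h2 : DifferentiableAt ℂ f (m z) :=
      (hf (m z) (hm_mem z hz)).differentiableAt (hopen.mem_nhds (hm_mem z hz))
    have h3 : DifferentiableAt ℂ A (f (m z)) := hA_diff _ (hm (hm_mem z hz))
    exact (h3.comp _ h2).comp_differentiableWithinAt z h1
  have hF_maps : Set.MapsTo F (ball (0:ℂ) 1) (ball (0:ℂ) 1) := by
    intro z hz
    exact hA_mem _ (hm (hm_mem z hz))
  have hF0 : F 0 = 0 := by
    have h1 : m 0 = ξ := by rw [hmdef]; simp
    have h2 : A a = 0 := by rw [hAdef]; simp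
    rw [hFdef]; simp only [h1, ← ha, h2]
  have hdenζ : ζ + (starRingEnd ℂ) ξ ≠ 0 := aux_abs_ne ζ ξ hζ hξ
  have h6 : 0 < Complex.abs (ζ + (starRingEnd ℂ) ξ) := Complex.abs.pos hdenζ
  set z₀ : ℂ := (ζ - ξ) / (ζ + (starRingEnd ℂ) ξ) with hz₀
  have habsz₀ : Complex.abs z₀ < 1 := by
    rw [hz₀, map_div₀, div_lt_one h6]
    exact aux_abs_lt ζ ξ hζ hξ
  have hξξ : ξ + (starRingEnd ℂ) ξ ≠ 0 := aux_abs_ne ξ ξ hξ hξ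
  have hmz₀ : m z₀ = ζ := by
    rw [hmdef, hz₀]
    have h1 : (1:ℂ) - (ζ - ξ) / (ζ + (starRingEnd ℂ) ξ) ≠ 0 := by
      rw [sub_ne_zero]
      intro h
      have := congrArg (fun w => w * (ζ + (starRingEnd ℂ) ξ)) h
      simp only [one_mul, div_mul_cancel₀ _ hdenζ] at this
      exact hξξ (by linear_combination this)
    simp only
    field_simp
    rw [div_eq_iff (by rw [show ζ + (starRingEnd ℂ) ξ - (ζ - ξ) = ξ + (starRingEnd ℂ) ξ by ring]; exact hξξ)]
    ring
  have hSch := Complex.abs_le_abs_of_mapsTo_ball_self hF_diff hF_maps hF0 habsz₀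
  have hFz₀ : F z₀ = (f ζ - a) / (f ζ + (starRingEnd ℂ) a) := by
    rw [hFdef]; simp only [hmz₀]; rfl
  rw [hFz₀, hz₀, map_div₀, map_div₀] at hSch
  have h5 : 0 < Complex.abs (f ζ + (starRingEnd ℂ) a) :=
    Complex.abs.pos (aux_abs_ne (f ζ) a hfζ hfξ)
  rw [div_le_div_iff₀ h5 h6] at hSch
  linarith [hSch]

/-- Weak two-point Schwarz–Pick: only `Re f ≥ 0` needed. -/
lemma sp2w {f : ℂ → ℂ} (hf : DifferentiableOn ℂ f {z : ℂ | 0 < z.re})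
    (hm : ∀ z ∈ {z : ℂ | 0 < z.re}, 0 ≤ (f z).re)
    {ζ ξ : ℂ} (hζ : 0 < ζ.re) (hξ : 0 < ξ.re) :
    Complex.abs (f ζ - f ξ) * Complex.abs (ζ + (starRingEnd ℂ) ξ)
      ≤ Complex.abs (ζ - ξ) * Complex.abs (f ζ + (starRingEnd ℂ) (f ξ)) := by
  have key : ∀ δ : ℝ, 0 < δ →
      Complex.abs (f ζ - f ξ) * Complex.abs (ζ + (starRingEnd ℂ) ξ)
        ≤ Complex.abs (ζ - ξ) * Complex.abs (f ζ + (starRingEnd ℂ) (f ξ) + 2 * δ) := by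
    intro δ hδ
    have h1 : DifferentiableOn ℂ (fun z => f z + δ) {z : ℂ | 0 < z.re} :=
      hf.add_const _
    have h2 : Set.MapsTo (fun z => f z + δ) {z : ℂ | 0 < z.re} {z : ℂ | 0 < z.re} := by
      intro z hz
      have := hm z hz
      show 0 < (f z + (δ:ℂ)).re
      simp only [Complex.add_re, Complex.ofReal_re]
      linarith
    have h3 := sp2 h1 h2 hζ hξ
    simp only [add_sub_add_right_eq_sub] at h3
    have h4 : f ζ + (δ:ℂ) + (starRingEnd ℂ) (f ξ + (δ:ℂ))
        = f ζ + (starRingEnd ℂ) (f ξ) + 2 * (δ:ℝ) := by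
      rw [map_add, Complex.conj_ofReal]
      push_cast
      ring
    rw [h4] at h3
    exact h3
  have hlim : Tendsto (fun δ : ℝ =>
      Complex.abs (ζ - ξ) * Complex.abs (f ζ + (starRingEnd ℂ) (f ξ) + 2 * δ))
      (nhdsWithin 0 (Set.Ioi 0))
      (nhds (Complex.abs (ζ - ξ) * Complex.abs (f ζ + (starRingEnd ℂ) (f ξ)))) := by
    apply Tendsto.mono_left _ nhdsWithin_le_nhds
    have : Continuous (fun δ : ℝ =>
        Complex.abs (ζ - ξ) * Complex.abs (f ζ + (starRingEnd ℂ) (f ξ) + 2 * δ)) := by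
      continuity
    have h := this.tendsto 0
    simpa using h
  exact ge_of_tendsto hlim (by filter_upwards [self_mem_nhdsWithin] with δ hδ using key δ hδ)

/-- Schwarz–Pick derivative bound on the half plane. -/
lemma spd {f : ℂ → ℂ} (hf : DifferentiableOn ℂ f {z : ℂ | 0 < z.re})
    (hm : ∀ z ∈ {z : ℂ | 0 < z.re}, 0 ≤ (f z).re)
    {ξ : ℂ} (hξ : 0 < ξ.re) :
    Complex.abs (deriv f ξ) * ξ.re ≤ (f ξ).re := by
  have hopen : IsOpen {z : ℂ | 0 < z.re} := isOpen_lt continuous_const Complex.continuous_re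
  have hmem : {z : ℂ | 0 < z.re} ∈ nhds ξ := hopen.mem_nhds hξ
  have hdf : DifferentiableAt ℂ f ξ := (hf ξ hξ).differentiableAt hmem
  have hd : HasDerivAt f (deriv f ξ) ξ := hdf.hasDerivAt
  -- filter
  have hfeq : nhdsWithin ξ ({z : ℂ | 0 < z.re} \ {ξ}) = nhdsWithin ξ {ξ}ᶜ := by
    rw [Set.diff_eq, nhdsWithin_inter, nhdsWithin_eq_nhds.2 hmem]
    exact inf_of_le_right nhdsWithin_le_nhds
  have hne : (nhdsWithin ξ ({z : ℂ | 0 < z.re} \ {ξ})).NeBot := by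
    rw [hfeq]; infer_instance
  -- tendsto of slope
  have hslope : Tendsto (fun ζ => Complex.abs ((f ζ - f ξ) / (ζ - ξ)))
      (nhdsWithin ξ ({z : ℂ | 0 < z.re} \ {ξ})) (nhds (Complex.abs (deriv f ξ))) := by
    have h1 : Tendsto (slope f ξ) (nhdsWithin ξ {ξ}ᶜ) (nhds (deriv f ξ)) :=
      (hasDerivAt_iff_tendsto_slope.mp hd)
    have h2 := (Complex.continuous_abs.tendsto _).comp h1
    rw [← hfeq] at h2
    apply h2.congr
    intro ζ
    simp only [Function.comp_apply, slope_def_field]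
  -- tendsto of the ratio bound
  have hcont : ContinuousWithinAt f {z : ℂ | 0 < z.re} ξ := (hf ξ hξ).continuousWithinAt
  have hratio : Tendsto
      (fun ζ => Complex.abs (f ζ + (starRingEnd ℂ) (f ξ)) / Complex.abs (ζ + (starRingEnd ℂ) ξ))
      (nhdsWithin ξ ({z : ℂ | 0 < z.re} \ {ξ})) (nhds ((f ξ).re / ξ.re)) := by
    have hc1 : Tendsto f (nhdsWithin ξ ({z : ℂ | 0 < z.re} \ {ξ})) (nhds (f ξ)) := by
      have := hcont.tendsto
      exact this.mono_left (nhdsWithin_mono ξ (Set.diff_subset))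
    have hc2 : Tendsto (fun ζ : ℂ => ζ) (nhdsWithin ξ ({z : ℂ | 0 < z.re} \ {ξ})) (nhds ξ) :=
      tendsto_id.mono_left nhdsWithin_le_nhds
    have hnum : Tendsto (fun ζ => Complex.abs (f ζ + (starRingEnd ℂ) (f ξ)))
        (nhdsWithin ξ ({z : ℂ | 0 < z.re} \ {ξ})) (nhds (Complex.abs (f ξ + (starRingEnd ℂ) (f ξ)))) :=
      (Complex.continuous_abs.tendsto _).comp (hc1.add_const _)
    have hden : Tendsto (fun ζ : ℂ => Complex.abs (ζ + (starRingEnd ℂ) ξ))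
        (nhdsWithin ξ ({z : ℂ | 0 < z.re} \ {ξ})) (nhds (Complex.abs (ξ + (starRingEnd ℂ) ξ))) :=
      (Complex.continuous_abs.tendsto _).comp (hc2.add_const _)
    have habs1 : Complex.abs (f ξ + (starRingEnd ℂ) (f ξ)) = 2 * (f ξ).re := by
      rw [Complex.add_conj, Complex.abs_ofReal]
      rw [_root_.abs_of_nonneg (by linarith [hm ξ hξ])]
    have habs2 : Complex.abs (ξ + (starRingEnd ℂ) ξ) = 2 * ξ.re := by
      rw [Complex.add_conj, Complex.abs_ofReal]
      rw [_root_.abs_of_nonneg (by linarith)]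
    have := hnum.div hden (by rw [habs2]; positivity)
    rw [habs1, habs2] at this
    convert this using 2
    · rfl
    · rw [mul_div_mul_left _ _ (two_ne_zero' ℝ)]
  -- eventual inequality
  have hev : ∀ᶠ ζ in nhdsWithin ξ ({z : ℂ | 0 < z.re} \ {ξ}),
      Complex.abs ((f ζ - f ξ) / (ζ - ξ))
        ≤ Complex.abs (f ζ + (starRingEnd ℂ) (f ξ)) / Complex.abs (ζ + (starRingEnd ℂ) ξ) := by
    filter_upwards [self_mem_nhdsWithin] with ζ hζ'
    obtain ⟨hζH, hζne⟩ := hζ'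
    have hζre : 0 < ζ.re := hζH
    have hzne : ζ - ξ ≠ 0 := sub_ne_zero.2 hζne
    have h1 := sp2w hf hm hζre hξ
    rw [map_div₀]
    rw [div_le_div_iff₀ (Complex.abs.pos hzne) (Complex.abs.pos (by
      intro h
      have : (ζ + (starRingEnd ℂ) ξ).re = 0 := by rw [h]; simp
      simp [Complex.add_re] at this
      linarith))]
    linarith [h1]
  have hfinal : Complex.abs (deriv f ξ) ≤ (f ξ).re / ξ.re :=
    le_of_tendsto_of_tendsto hslope hratio hev
  rw [div_eq_mul_inv] at hfinal
  calc Complex.abs (deriv f ξ) * ξ.re ≤ (f ξ).re * ξ.re⁻¹ * ξ.re := by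
        apply mul_le_mul_of_nonneg_right hfinal hξ.le
    _ = (f ξ).re := by field_simp

/-- Monotonicity: `x ↦ Re f(x) / x` is non-increasing on positive reals. -/
lemma mono_re {f : ℂ → ℂ} (hf : DifferentiableOn ℂ f {z : ℂ | 0 < z.re})
    (hm : Set.MapsTo f {z : ℂ | 0 < z.re} {z : ℂ | 0 < z.re})
    {x y : ℝ} (hx : 0 < x) (hxy : x ≤ y) :
    x * (f y).re ≤ y * (f x).re := by
  have hy : 0 < y := lt_of_lt_of_le hx hxy
  have h := sp2 hf hm (ζ := (y:ℂ)) (ξ := (x:ℂ)) (by simpa using hy) (by simpa using hx)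
  rw [Complex.conj_ofReal] at h
  have e1 : ((y:ℂ) + (x:ℂ)) = ((y + x : ℝ) : ℂ) := by push_cast; ring
  have e2 : ((y:ℂ) - (x:ℂ)) = ((y - x : ℝ) : ℂ) := by push_cast; ring
  rw [e1, e2, Complex.abs_ofReal, Complex.abs_ofReal,
    _root_.abs_of_nonneg (by linarith), _root_.abs_of_nonneg (by linarith)] at h
  set a := f (y:ℂ) with ha
  set b := f (x:ℂ) with hb
  have hu : 0 < b.re := hm (by simpa using hx)
  have hv : 0 < a.re := hm (by simpa using hy)
  -- square the inequality
  have habs1 : 0 ≤ Complex.abs (a - b) := Complex.abs.nonneg _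
  have habs2 : 0 ≤ Complex.abs (a + (starRingEnd ℂ) b) := Complex.abs.nonneg _
  have hsq : Complex.normSq (a - b) * (y + x)^2
      ≤ (y - x)^2 * Complex.normSq (a + (starRingEnd ℂ) b) := by
    have h2 : (Complex.abs (a - b) * (y + x))^2
        ≤ ((y - x) * Complex.abs (a + (starRingEnd ℂ) b))^2 := by
      apply sq_le_sq' _ h
      nlinarith
    rw [mul_pow, mul_pow, Complex.sq_abs, Complex.sq_abs] at h2
    linarith
  have hid := aux_normSq_id a b
  have hre : ((a - b).re)^2 ≤ Complex.normSq (a - b) := by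
    rw [Complex.normSq_apply]
    nlinarith [sq_nonneg ((a-b).im), sq_nonneg ((a-b).re)]
  have hre2 : (a - b).re = a.re - b.re := by simp [Complex.sub_re]
  rw [hre2] at hre
  set N := Complex.normSq (a - b) with hN
  have e : (y - x)^2 * Complex.normSq (a + (starRingEnd ℂ) b)
      = (y-x)^2 * N + (y-x)^2 * (4 * a.re * b.re) := by
    linear_combination (y-x)^2 * hid
  have s1 : N * (4*(x*y)) ≤ 4*(a.re*b.re)*(y-x)^2 := by nlinarith [hsq, e]
  have s2 := mul_le_mul_of_nonneg_right hre (mul_pos hx hy).le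
  have hkey : (a.re - b.re)^2 * (x * y) ≤ a.re * b.re * (y - x)^2 := by nlinarith [s1, s2]
  -- conclude x * a.re ≤ y * b.re
  by_contra hcon
  push_neg at hcon
  have e2 : (y*b.re - x*a.re)*(y*a.re - x*b.re)
      = a.re*b.re*(y-x)^2 - (a.re-b.re)^2*(x*y) := by ring
  have h2 : 0 ≤ (y*b.re - x*a.re)*(y*a.re - x*b.re) := by rw [e2]; linarith
  have t1 : x*a.re ≤ y*a.re := by nlinarith
  have t2 : x*b.re ≤ y*b.re := by nlinarith
  have h1 : 0 < y*a.re - x*b.re := by linarith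
  have h3 : y*b.re - x*a.re < 0 := by linarith
  nlinarith [mul_neg_of_neg_of_pos h3 h1]

set_option maxHeartbeats 1000000 in
/-- Julia's inequality at infinity. -/
lemma julia {ψ : ℂ → ℂ} (hf : DifferentiableOn ℂ ψ {z : ℂ | 0 < z.re})
    (hm : Set.MapsTo ψ {z : ℂ | 0 < z.re} {z : ℂ | 0 < z.re}) {c : ℝ}
    (hlim : Tendsto (fun t : ℝ => (ψ (t:ℂ)).re / t) atTop (nhds c))
    (habs : Tendsto (fun n : ℕ => Complex.abs (ψ (((n:ℝ)):ℂ))) atTop atTop)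
    {ζ : ℂ} (hζ : 0 < ζ.re) : c * ζ.re ≤ (ψ ζ).re := by
  set aζ := Complex.abs ζ with haζ
  set a := ψ ζ with ha
  have hare : 0 < a.re := hm hζ
  have haa : 0 ≤ Complex.abs a := Complex.abs.nonneg a
  -- limits
  have hcast : Tendsto (fun n : ℕ => ((n:ℝ))) atTop atTop := tendsto_natCast_atTop_atTop
  have hf3 : Tendsto (fun n : ℕ => (ψ (((n:ℝ)):ℂ)).re / (n:ℝ)) atTop (nhds c) :=
    hlim.comp hcast
  have hden : Tendsto (fun n : ℕ => aζ + (n:ℝ)) atTop atTop :=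
    tendsto_atTop_add_const_left _ aζ hcast
  have hf1' : Tendsto (fun n : ℕ => aζ / (aζ + (n:ℝ))) atTop (nhds 0) :=
    Tendsto.div_atTop tendsto_const_nhds hden
  have hf1 : Tendsto (fun n : ℕ => (n:ℝ) / (aζ + (n:ℝ))) atTop (nhds 1) := by
    have h2 : Tendsto (fun n : ℕ => 1 - aζ / (aζ + (n:ℝ))) atTop (nhds 1) := by
      have := hf1'.const_sub 1
      simpa using this
    apply h2.congr'
    filter_upwards [eventually_ge_atTop 1] with n hn
    have hn' : (1:ℝ) ≤ (n:ℝ) := by exact_mod_cast hn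
    have hpos : 0 < aζ + (n:ℝ) := by positivity
    field_simp
    ring
  have hf2 : Tendsto (fun n : ℕ => 1 - Complex.abs a / Complex.abs (ψ (((n:ℝ)):ℂ)))
      atTop (nhds 1) := by
    have := Tendsto.div_atTop (tendsto_const_nhds (x := Complex.abs a)) habs
    have h2 := this.const_sub 1
    simpa using h2
  have hT : Tendsto (fun n : ℕ => ζ.re *
      (((n:ℝ) / (aζ + (n:ℝ)))^2 * (1 - Complex.abs a / Complex.abs (ψ (((n:ℝ)):ℂ)))^2
        * ((ψ (((n:ℝ)):ℂ)).re / (n:ℝ)))) atTop (nhds (ζ.re * c)) := by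
    have := ((hf1.pow 2).mul (hf2.pow 2)).mul hf3
    have h2 := this.const_mul ζ.re
    simpa using h2
  -- eventual inequality
  have hev : ∀ᶠ n : ℕ in atTop, ζ.re *
      (((n:ℝ) / (aζ + (n:ℝ)))^2 * (1 - Complex.abs a / Complex.abs (ψ (((n:ℝ)):ℂ)))^2
        * ((ψ (((n:ℝ)):ℂ)).re / (n:ℝ))) ≤ a.re := by
    filter_upwards [eventually_ge_atTop 1, habs.eventually_ge_atTop (Complex.abs a),
      habs.eventually_ge_atTop 1] with n hn1 hnw hnw1
    set x : ℝ := (n:ℝ) with hx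
    have hx1 : (1:ℝ) ≤ x := by rw [hx]; exact_mod_cast hn1
    have hx0 : 0 < x := by linarith
    set w := ψ ((x:ℂ)) with hw
    have hwre : 0 < w.re := hm (by simp [hx0])
    have hwa : 0 < Complex.abs w := lt_of_lt_of_le one_pos hnw1
    set r := Complex.abs a / Complex.abs w with hr
    have hr01 : 0 ≤ r := by positivity
    have hr1 : r ≤ 1 := by
      rw [hr, div_le_one hwa]; exact hnw
    -- Schwarz-Pick squared
    have hsp := sp2 hf hm (ζ := ζ) (ξ := (x:ℂ)) hζ (by simp [hx0])
    rw [Complex.conj_ofReal] at hsp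
    have habs1 : (0:ℝ) ≤ Complex.abs (a - w) := Complex.abs.nonneg _
    have habs2 : (0:ℝ) ≤ Complex.abs (ζ + (x:ℂ)) := Complex.abs.nonneg _
    have hsq : Complex.normSq (a - w) * Complex.normSq (ζ + (x:ℂ))
        ≤ Complex.normSq (ζ - (x:ℂ)) * Complex.normSq (a + (starRingEnd ℂ) w) := by
      have h2 : (Complex.abs (a - w) * Complex.abs (ζ + (x:ℂ)))^2
          ≤ (Complex.abs (ζ - (x:ℂ)) * Complex.abs (a + (starRingEnd ℂ) w))^2 := by
        apply sq_le_sq' _ hsp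
        have := Complex.abs.nonneg (ζ - (x:ℂ))
        have := Complex.abs.nonneg (a + (starRingEnd ℂ) w)
        nlinarith
      rw [mul_pow, mul_pow, Complex.sq_abs, Complex.sq_abs, Complex.sq_abs, Complex.sq_abs] at h2
      exact h2
    set S1 := Complex.normSq (ζ - (x:ℂ)) with hS1
    set S2 := Complex.normSq (ζ + (x:ℂ)) with hS2
    set N1 := Complex.normSq (a - w) with hN1
    set N2 := Complex.normSq (a + (starRingEnd ℂ) w) with hN2
    have hSid : S2 - S1 = 4 * ζ.re * x := by
      have := aux_normSq_id ζ ((x:ℂ))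
      rw [Complex.conj_ofReal] at this
      simpa using this
    have hN2nn : 0 ≤ N2 := Complex.normSq_nonneg _
    have hNid : N2 - N1 = 4 * a.re * w.re := aux_normSq_id a w
    -- bound S2
    have hS2le : S2 ≤ (aζ + x)^2 := by
      have h1 : Complex.abs (ζ + (x:ℂ)) ≤ aζ + x := by
        calc Complex.abs (ζ + (x:ℂ)) ≤ Complex.abs ζ + Complex.abs (x:ℂ) :=
              Complex.abs.add_le _ _
          _ = aζ + x := by rw [Complex.abs_ofReal, _root_.abs_of_nonneg hx0.le]
      have := Complex.sq_abs (ζ + (x:ℂ))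
      nlinarith [Complex.abs.nonneg (ζ + (x:ℂ))]
    -- bound N2 from below
    have hN2ge : (w.re * (1 - r))^2 ≤ N2 := by
      have h1 : Complex.abs w - Complex.abs a ≤ Complex.abs (a + (starRingEnd ℂ) w) := by
        have h0 : Complex.abs ((a + (starRingEnd ℂ) w) + (-a))
            ≤ Complex.abs (a + (starRingEnd ℂ) w) + Complex.abs (-a) := Complex.abs.add_le _ _
        have h1' : (a + (starRingEnd ℂ) w) + (-a) = (starRingEnd ℂ) w := by ring
        rw [h1', Complex.abs.map_neg, Complex.abs_conj] at h0
        linarith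
      have h3 : w.re * (1 - r) ≤ Complex.abs w - Complex.abs a := by
        have h4 : Complex.abs w * (1 - r) = Complex.abs w - Complex.abs a := by
          rw [hr, mul_sub, mul_one]
          congr 1
          field_simp
        have h5 : w.re ≤ Complex.abs w := Complex.re_le_abs w
        nlinarith
      have h6 : 0 ≤ w.re * (1 - r) := by nlinarith
      have h7 := Complex.sq_abs (a + (starRingEnd ℂ) w)
      nlinarith [Complex.abs.nonneg (a + (starRingEnd ℂ) w), h7]
    clear_value S1 S2 N1 N2
    -- key inequality
    have hdagger : x * ζ.re * N2 ≤ a.re * w.re * S2 := by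
      have e1 : N2*S2 - N1*S2 = 4*a.re*w.re*S2 := by linear_combination S2 * hNid
      have e2 : N2*S2 - S1*N2 = 4*ζ.re*x*N2 := by linear_combination N2 * hSid
      nlinarith [hsq, e1, e2]
    -- combine
    have hcomb : x * ζ.re * (w.re * (1 - r))^2 ≤ a.re * w.re * (aζ + x)^2 := by
      calc x * ζ.re * (w.re * (1 - r))^2 ≤ x * ζ.re * N2 := by
            apply mul_le_mul_of_nonneg_left hN2ge (by positivity)
        _ ≤ a.re * w.re * S2 := hdagger
        _ ≤ a.re * w.re * (aζ + x)^2 := by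
            apply mul_le_mul_of_nonneg_left hS2le (by positivity)
    -- divide
    have haζx : 0 < aζ + x := by
      have h9 : 0 ≤ aζ := Complex.abs.nonneg ζ
      linarith
    clear_value x w a r
    have h8 : w.re * (ζ.re*x*w.re*(1-r)^2) ≤ w.re * (a.re*(aζ+x)^2) := by nlinarith [hcomb]
    have key := le_of_mul_le_mul_left h8 hwre
    have hLHS : ζ.re * ((x/(aζ+x))^2 * (1-r)^2 * (w.re/x))
        = (ζ.re*x*w.re*(1-r)^2)/(aζ+x)^2 := by
      field_simp
    rw [hLHS, div_le_iff₀ (by positivity)]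
    linarith [key]
  have hfin := le_of_tendsto hT hev
  calc c * ζ.re = ζ.re * c := by ring
    _ ≤ a.re := hfin

set_option maxHeartbeats 1000000 in
/-- Harnack-type estimate in a sector. -/
lemma harnack {g : ℂ → ℂ} (hg : DifferentiableOn ℂ g {z : ℂ | 0 < z.re})
    (hre : ∀ z ∈ {z : ℂ | 0 < z.re}, 0 ≤ (g z).re)
    {k : ℝ} (hk0 : 0 < k) (hk1 : k ≤ 1)
    {ζ : ℂ} (hζ0 : ζ ≠ 0) (hkζ : k * Complex.abs ζ ≤ ζ.re) :
    k * Complex.abs (g ζ - g ((Complex.abs ζ : ℝ) : ℂ))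
      ≤ 4 * (g ((Complex.abs ζ : ℝ) : ℂ)).re := by
  set x : ℝ := Complex.abs ζ with hxdef
  have hx0 : 0 < x := Complex.abs.pos hζ0
  have hζre : 0 < ζ.re := lt_of_lt_of_le (by positivity) hkζ
  have hxH : (0:ℝ) < ((x:ℂ)).re := by simp [hx0]
  have hsp := sp2w hg hre hζre hxH
  rw [Complex.conj_ofReal] at hsp
  set D := Complex.abs (g ζ - g ((x:ℂ))) with hD
  set R := (g ((x:ℂ))).re with hR
  have hR0 : 0 ≤ R := hre _ hxH
  have hD0 : 0 ≤ D := Complex.abs.nonneg _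
  -- B2 ≤ D + 2R
  have hB2 : Complex.abs (g ζ + (starRingEnd ℂ) (g ((x:ℂ)))) ≤ D + 2 * R := by
    have h1 : g ζ + (starRingEnd ℂ) (g ((x:ℂ)))
        = (g ζ - g ((x:ℂ))) + (g ((x:ℂ)) + (starRingEnd ℂ) (g ((x:ℂ)))) := by ring
    rw [h1]
    calc Complex.abs ((g ζ - g ((x:ℂ))) + (g ((x:ℂ)) + (starRingEnd ℂ) (g ((x:ℂ)))))
        ≤ D + Complex.abs (g ((x:ℂ)) + (starRingEnd ℂ) (g ((x:ℂ)))) := Complex.abs.add_le _ _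
      _ = D + 2 * R := by
          rw [Complex.add_conj, Complex.abs_ofReal, _root_.abs_of_nonneg (by linarith)]
  -- normSq computations
  have hsqx : ζ.re^2 + ζ.im^2 = x^2 := by
    have h := Complex.sq_abs ζ
    rw [← hxdef, Complex.normSq_apply] at h
    nlinarith [h]
  have hS1 : Complex.normSq (ζ - (x:ℂ)) = 2*x^2 - 2*x*ζ.re := by
    simp [Complex.normSq_apply, Complex.sub_re, Complex.sub_im]
    nlinarith [hsqx]
  have hS2 : Complex.normSq (ζ + (x:ℂ)) = 2*x^2 + 2*x*ζ.re := by
    simp [Complex.normSq_apply, Complex.add_re, Complex.add_im]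
    nlinarith [hsqx]
  -- squared inequality
  set A1 := Complex.abs (ζ - (x:ℂ)) with hA1
  set A2 := Complex.abs (ζ + (x:ℂ)) with hA2
  set B := Complex.abs (g ζ + (starRingEnd ℂ) (g ((x:ℂ)))) with hBd
  have e1 : A1^2 = 2*x^2 - 2*x*ζ.re := by rw [hA1, Complex.sq_abs]; exact hS1
  have e2 : A2^2 = 2*x^2 + 2*x*ζ.re := by rw [hA2, Complex.sq_abs]; exact hS2
  have hA10 : 0 ≤ A1 := Complex.abs.nonneg _
  have hA20 : 0 ≤ A2 := Complex.abs.nonneg _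
  have hB0 : 0 ≤ B := Complex.abs.nonneg _
  clear_value D R A1 A2 B
  have hsq : D^2 * (2*x^2 + 2*x*ζ.re) ≤ (2*x^2 - 2*x*ζ.re) * (D + 2*R)^2 := by
    have h2 : (D * A2)^2 ≤ (A1 * B)^2 := by
      apply sq_le_sq' _ hsp
      nlinarith [hsp, mul_nonneg hD0 hA20, mul_nonneg hA10 hB0]
    have h3 : B^2 ≤ (D + 2*R)^2 := by
      apply sq_le_sq' _ hB2
      linarith
    have h5 : D^2 * A2^2 ≤ A1^2 * (D+2*R)^2 := by
      calc D^2 * A2^2 = (D*A2)^2 := by ring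
        _ ≤ (A1*B)^2 := h2
        _ = A1^2 * B^2 := by ring
        _ ≤ A1^2 * (D+2*R)^2 := mul_le_mul_of_nonneg_left h3 (sq_nonneg A1)
    rw [e1, e2] at h5
    exact h5
  -- reduce : D^2 (1+k) ≤ (1-k)(D+2R)^2  after dividing by 2x^2... use hkζ : k x ≤ ζ.re
  have hquad : D^2 * (1+k) ≤ (1-k) * (D + 2*R)^2 := by
    have h5 : D^2 * (2*x^2 + 2*x*(k*x)) ≤ D^2 * (2*x^2 + 2*x*ζ.re) := by
      apply mul_le_mul_of_nonneg_left _ (sq_nonneg D)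
      nlinarith
    have h6 : (2*x^2 - 2*x*ζ.re) * (D + 2*R)^2 ≤ (2*x^2 - 2*x*(k*x)) * (D + 2*R)^2 := by
      apply mul_le_mul_of_nonneg_right _ (sq_nonneg _)
      nlinarith
    have h7 : D^2 * (2*x^2*(1+k)) ≤ (2*x^2*(1-k)) * (D + 2*R)^2 := by
      calc D^2 * (2*x^2*(1+k)) = D^2 * (2*x^2 + 2*x*(k*x)) := by ring
        _ ≤ D^2 * (2*x^2 + 2*x*ζ.re) := h5
        _ ≤ (2*x^2 - 2*x*ζ.re) * (D + 2*R)^2 := hsq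
        _ ≤ (2*x^2 - 2*x*(k*x)) * (D + 2*R)^2 := h6
        _ = (2*x^2*(1-k)) * (D + 2*R)^2 := by ring
    have hx2 : 0 < 2*x^2 := by positivity
    nlinarith [h7, hx2]
  -- conclude k D ≤ 4 R
  have h1 : 2*k*D^2 ≤ 4*(1-k)*(D*R) + 4*(1-k)*R^2 := by nlinarith [hquad]
  by_contra hcon
  push_neg at hcon
  have hDpos : 0 < D := by nlinarith
  nlinarith [h1, hcon, hDpos, hR0, hk0, hk1, mul_nonneg hR0 hD0,
    mul_lt_mul_of_pos_right hcon hDpos, mul_le_mul_of_nonneg_left hcon.le hR0]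

set_option maxHeartbeats 1000000 in
/-- Angular derivative at infinity: a conformal map of the right half plane into itself
fixing `∞` has `ψ'(ζ) → c ≥ 0` and `ψ(ζ)/ζ → c` as `ζ → ∞` in sectors `|arg ζ| ≤ β < π/2`. -/
theorem stmt13 (ψ : ℂ → ℂ) (H : Set ℂ) (hH : H = {z : ℂ | 0 < z.re})
    (hψ : DifferentiableOn ℂ ψ H) (hinj : Set.InjOn ψ H) (hmap : Set.MapsTo ψ H H)
    (hinf : Tendsto ψ (comap (fun z : ℂ => ‖z‖) atTop ⊓ 𝓟 H) (comap (fun z : ℂ => ‖z‖) atTop)) :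
    ∀ β : ℝ, 0 < β → β < Real.pi / 2 →
      ∃ c : ℝ, 0 ≤ c ∧
        Tendsto (deriv ψ)
          (comap (fun z : ℂ => ‖z‖) atTop ⊓ 𝓟 {ζ : ℂ | |Complex.arg ζ| ≤ β}) (nhds (c : ℂ)) ∧
        Tendsto (fun ζ => ψ ζ / ζ)
          (comap (fun z : ℂ => ‖z‖) atTop ⊓ 𝓟 {ζ : ℂ | |Complex.arg ζ| ≤ β}) (nhds (c : ℂ)) := by
  subst hH
  intro β hβ0 hβπ
  have hopen : IsOpen {z : ℂ | 0 < z.re} := isOpen_lt continuous_const Complex.continuous_re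
  have hπ : 0 < Real.pi := Real.pi_pos
  -- positivity of ψ on positive reals
  have hψpos : ∀ t : ℝ, 0 < t → 0 < (ψ ((t:ℂ))).re := by
    intro t ht
    exact hmap (show ((t:ℂ)) ∈ {z : ℂ | 0 < z.re} by simp [ht])
  -- the decreasing quotient
  set Q : ℝ → ℝ := fun t => (ψ (((max t 1 : ℝ)):ℂ)).re / (max t 1) with hQdef
  have hmax1 : ∀ t : ℝ, (0:ℝ) < max t 1 := fun t => lt_of_lt_of_le one_pos (le_max_right _ _)
  have hQ0 : ∀ t, 0 ≤ Q t := fun t => le_of_lt (div_pos (hψpos _ (hmax1 t)) (hmax1 t))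
  have hanti : Antitone Q := by
    intro s t hst
    have h1 : max s 1 ≤ max t 1 := max_le_max hst le_rfl
    have h2 := mono_re hψ hmap (hmax1 s) h1
    rw [hQdef]
    simp only
    rw [div_le_div_iff₀ (hmax1 t) (hmax1 s)]
    nlinarith [h2]
  have hbdd : BddBelow (Set.range Q) := ⟨0, by rintro _ ⟨t, rfl⟩; exact hQ0 t⟩
  set c := ⨅ t, Q t with hcdef
  have hc0 : 0 ≤ c := le_ciInf hQ0
  have hQlim : Tendsto Q atTop (nhds c) := tendsto_atTop_ciInf hanti hbdd
  have hlim : Tendsto (fun t : ℝ => (ψ ((t:ℂ))).re / t) atTop (nhds c) := by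
    apply hQlim.congr'
    filter_upwards [eventually_ge_atTop 1] with t ht
    rw [hQdef]
    simp only [max_eq_left ht]
  -- abs ψ(n) → ∞ along natural numbers
  have hseq : Tendsto (fun n : ℕ => (((n:ℝ)):ℂ)) atTop
      (comap Complex.abs atTop ⊓ 𝓟 {z : ℂ | 0 < z.re}) := by
    rw [tendsto_inf]
    constructor
    · rw [tendsto_comap_iff]
      have he : (Complex.abs ∘ fun n : ℕ => (((n:ℝ)):ℂ)) = fun n : ℕ => (n:ℝ) := by
        funext n
        simp [Function.comp, Complex.abs_apply]
      rw [he]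
      exact tendsto_natCast_atTop_atTop
    · rw [tendsto_principal]
      filter_upwards [eventually_ge_atTop 1] with n hn
      have h1 : (1:ℝ) ≤ (n:ℝ) := by exact_mod_cast hn
      show 0 < ((((n:ℝ)):ℂ)).re
      simp only [Complex.ofReal_re]
      linarith
  have habs : Tendsto (fun n : ℕ => Complex.abs (ψ (((n:ℝ)):ℂ))) atTop atTop := by
    have h1 := hinf.comp hseq
    rw [tendsto_comap_iff] at h1
    exact h1
  -- Julia
  have hJ : ∀ ζ : ℂ, 0 < ζ.re → c * ζ.re ≤ (ψ ζ).re := fun ζ hζ => julia hψ hmap hlim habs hζ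
  -- g
  set g : ℂ → ℂ := fun z => ψ z - (c:ℂ) * z with hgdef
  have hgdiff : DifferentiableOn ℂ g {z : ℂ | 0 < z.re} :=
    hψ.sub ((differentiable_id.const_mul _).differentiableOn)
  have hcre : ∀ z : ℂ, ((c:ℂ) * z).re = c * z.re := by
    intro z
    simp [Complex.mul_re]
  have hgre : ∀ z ∈ {z : ℂ | 0 < z.re}, 0 ≤ (g z).re := by
    intro z hz
    have h1 := hJ z hz
    rw [hgdef]
    simp only [Complex.sub_re, hcre]
    linarith
  have hgderiv : ∀ z : ℂ, 0 < z.re → deriv g z = deriv ψ z - c := by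
    intro z hz
    have hψz : DifferentiableAt ℂ ψ z := (hψ z hz).differentiableAt (hopen.mem_nhds hz)
    have h2 : HasDerivAt (fun w : ℂ => ψ w - (c:ℂ) * w) (deriv ψ z - (c:ℂ) * 1) z :=
      hψz.hasDerivAt.sub ((hasDerivAt_id z).const_mul (c:ℂ))
    rw [hgdef]
    simpa using h2.deriv
  have hgd : ∀ z : ℂ, 0 < z.re → Complex.abs (deriv g z) * z.re ≤ (g z).re :=
    fun z hz => spd hgdiff hgre hz
  -- Re g(t)/t limits and monotonicity
  have hglim : Tendsto (fun t : ℝ => (g ((t:ℂ))).re / t) atTop (nhds 0) := by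
    have h1 := hlim.sub_const c
    rw [sub_self] at h1
    apply h1.congr'
    filter_upwards [eventually_ge_atTop 1] with t ht
    have ht0 : (0:ℝ) < t := lt_of_lt_of_le one_pos ht
    rw [hgdef]
    simp only [Complex.sub_re, hcre, Complex.ofReal_re]
    field_simp
  have hgmono : ∀ s t : ℝ, 1 ≤ s → s ≤ t →
      (g ((t:ℂ))).re / t ≤ (g ((s:ℂ))).re / s := by
    intro s t hs hst
    have hs0 : (0:ℝ) < s := lt_of_lt_of_le one_pos hs
    have ht0 : (0:ℝ) < t := lt_of_lt_of_le hs0 hst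
    have h1 := mono_re hψ hmap hs0 hst
    rw [hgdef]
    simp only [Complex.sub_re, hcre, Complex.ofReal_re]
    rw [div_le_div_iff₀ ht0 hs0]
    nlinarith [h1]
  -- sector geometry
  set k := Real.cos β with hkdef
  have hk0 : 0 < k := Real.cos_pos_of_mem_Ioo ⟨by linarith, by linarith⟩
  have hk1 : k ≤ 1 := Real.cos_le_one β
  have hsector : ∀ ζ : ℂ, ζ ≠ 0 → |Complex.arg ζ| ≤ β → k * Complex.abs ζ ≤ ζ.re := by
    intro ζ h0 harg
    have hcos : Real.cos (Complex.arg ζ) = ζ.re / Complex.abs ζ := Complex.cos_arg h0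
    have h3 : Real.cos β ≤ Real.cos |Complex.arg ζ| :=
      Real.cos_le_cos_of_nonneg_of_le_pi (abs_nonneg _) (by linarith) harg
    rw [Real.cos_abs] at h3
    have habs0 : 0 < Complex.abs ζ := Complex.abs.pos h0
    have h4 : k ≤ ζ.re / Complex.abs ζ := by rw [← hcos]; exact h3
    calc k * Complex.abs ζ ≤ (ζ.re / Complex.abs ζ) * Complex.abs ζ :=
          mul_le_mul_of_nonneg_right h4 habs0.le
      _ = ζ.re := by field_simp
  -- MVT on the real axis
  have hMVT : ∀ s t : ℝ, 1 ≤ s → s ≤ t →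
      Complex.abs (g ((t:ℂ)) - g ((s:ℂ))) ≤ ((g ((s:ℂ))).re / s) * (t - s) := by
    intro s t hs hst
    have hs0 : (0:ℝ) < s := lt_of_lt_of_le one_pos hs
    set C := (g ((s:ℂ))).re / s with hC
    have hder : ∀ u ∈ Icc s t, HasDerivWithinAt (fun u : ℝ => g ((u:ℂ)))
        (deriv g ((u:ℂ))) (Icc s t) u := by
      intro u hu
      have hu0 : 0 < u := lt_of_lt_of_le hs0 hu.1
      have huH : ((u:ℂ)) ∈ {z : ℂ | 0 < z.re} := by simp [hu0]
      have hda : DifferentiableAt ℂ g ((u:ℂ)) :=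
        (hgdiff _ huH).differentiableAt (hopen.mem_nhds huH)
      exact hda.hasDerivAt.comp_ofReal.hasDerivWithinAt
    have hbound : ∀ u ∈ Ico s t, ‖deriv g ((u:ℂ))‖ ≤ C := by
      intro u hu
      have hu1 : 1 ≤ u := le_trans hs hu.1
      have hu0 : 0 < u := lt_of_lt_of_le one_pos hu1
      have h1 := hgd ((u:ℂ)) (by simp [hu0])
      rw [Complex.ofReal_re] at h1
      have h2 : Complex.abs (deriv g ((u:ℂ))) ≤ (g ((u:ℂ))).re / u := by
        rw [le_div_iff₀ hu0]
        exact h1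
      have h3 := hgmono s u hs hu.1
      rw [Complex.norm_eq_abs]
      calc Complex.abs (deriv g ((u:ℂ))) ≤ (g ((u:ℂ))).re / u := h2
        _ ≤ (g ((s:ℂ))).re / s := h3
    have h4 := norm_image_sub_le_of_norm_deriv_le_segment' hder hbound t (right_mem_Icc.2 hst)
    rw [Complex.norm_eq_abs] at h4
    exact h4
  -- the main pointwise estimate
  set Cβ : ℝ := (k+4)/k^2 + (2*k+4)/k with hCβdef
  have hCβ0 : 0 < Cβ := by positivity
  have hmain : ∀ ε' : ℝ, 0 < ε' → ∃ R : ℝ, 1 ≤ R ∧ ∀ ζ : ℂ,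
      R ≤ Complex.abs ζ → |Complex.arg ζ| ≤ β →
      Complex.abs (deriv ψ ζ - (c:ℂ)) ≤ ε' * Cβ ∧
      Complex.abs (ψ ζ / ζ - (c:ℂ)) ≤ ε' * Cβ := by
    intro ε' hε'
    obtain ⟨x₀, hx₀ε, hx₀1⟩ :=
      ((hglim.eventually (gt_mem_nhds hε')).and (eventually_ge_atTop 1)).exists
    set R : ℝ := max x₀ (Complex.abs (g ((x₀:ℂ))) / ε' + 1) with hRdef
    have hR1 : 1 ≤ R := by
      have h1 : (1:ℝ) ≤ x₀ := hx₀1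
      calc (1:ℝ) ≤ x₀ := h1
        _ ≤ R := le_max_left _ _
    refine ⟨R, hR1, ?_⟩
    intro ζ hζR hζS
    set x : ℝ := Complex.abs ζ with hxdef
    have hx1 : 1 ≤ x := le_trans hR1 hζR
    have hxx₀ : x₀ ≤ x := le_trans (le_max_left _ _) hζR
    have hx0 : 0 < x := lt_of_lt_of_le one_pos hx1
    have hζ0 : ζ ≠ 0 := by
      intro h
      rw [h] at hxdef
      simp at hxdef
      rw [hxdef] at hx0
      exact lt_irrefl _ hx0
    have hkx : k * x ≤ ζ.re := hsector ζ hζ0 hζS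
    have hζre : 0 < ζ.re := lt_of_lt_of_le (by positivity) hkx
    have hxH : (0:ℝ) < ((x:ℂ)).re := by simp [hx0]
    -- Harnack
    have hharn := harnack hgdiff hgre hk0 hk1 hζ0 hkx
    rw [← hxdef] at hharn
    set D := Complex.abs (g ζ - g ((x:ℂ))) with hDdef
    have hD0 : 0 ≤ D := Complex.abs.nonneg _
    set Rgx := (g ((x:ℂ))).re with hRgxdef
    have hRgx0 : 0 ≤ Rgx := hgre _ hxH
    have hDle : D ≤ 4 * Rgx / k := by
      rw [le_div_iff₀ hk0]
      linarith [hharn]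
    -- Rgx ≤ ε' x
    have hRgxle : Rgx ≤ ε' * x := by
      have h1 := hgmono x₀ x hx₀1 hxx₀
      have h2 : (g ((x:ℂ))).re / x < ε' := lt_of_le_of_lt h1 hx₀ε
      have h3 := mul_le_mul_of_nonneg_right h2.le hx0.le
      rw [div_mul_cancel₀ _ (ne_of_gt hx0)] at h3
      exact h3
    constructor
    · -- derivative bound
      have h1 := hgd ζ hζre
      have h2 : (g ζ).re ≤ Rgx + D := by
        have h3 : (g ζ - g ((x:ℂ))).re ≤ D := Complex.re_le_abs _
        simp only [Complex.sub_re] at h3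
        linarith
      have h4 : Complex.abs (deriv g ζ) * (k * x) ≤ ε' * x * ((k+4)/k) := by
        calc Complex.abs (deriv g ζ) * (k * x)
            ≤ Complex.abs (deriv g ζ) * ζ.re :=
              mul_le_mul_of_nonneg_left hkx (Complex.abs.nonneg _)
          _ ≤ (g ζ).re := h1
          _ ≤ Rgx + D := h2
          _ ≤ Rgx + 4 * Rgx / k := by linarith
          _ = Rgx * ((k+4)/k) := by field_simp
          _ ≤ ε' * x * ((k+4)/k) := by
              apply mul_le_mul_of_nonneg_right hRgxle
              positivity
      have h5 : Complex.abs (deriv g ζ) ≤ ε' * ((k+4)/k^2) := by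
        rw [← le_div_iff₀ (by positivity : (0:ℝ) < k * x)] at h4
        calc Complex.abs (deriv g ζ) ≤ ε' * x * ((k+4)/k) / (k * x) := h4
          _ = ε' * ((k+4)/k^2) := by field_simp
      rw [← hgderiv ζ hζre]
      calc Complex.abs (deriv g ζ) ≤ ε' * ((k+4)/k^2) := h5
        _ ≤ ε' * Cβ := by
            apply mul_le_mul_of_nonneg_left _ hε'.le
            rw [hCβdef]
            have : 0 ≤ (2*k+4)/k := by positivity
            linarith
    · -- ratio bound
      have h1 : ψ ζ / ζ - (c:ℂ) = g ζ / ζ := by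
        rw [hgdef]
        field_simp
      rw [h1, map_div₀, ← hxdef]
      have h2 : Complex.abs (g ((x:ℂ))) ≤ Complex.abs (g ((x₀:ℂ))) + ε' * x := by
        have h3 := hMVT x₀ x hx₀1 hxx₀
        have h4 : Complex.abs (g ((x:ℂ)))
            ≤ Complex.abs (g ((x₀:ℂ))) + Complex.abs (g ((x:ℂ)) - g ((x₀:ℂ))) := by
          have := Complex.abs.add_le (g ((x₀:ℂ))) (g ((x:ℂ)) - g ((x₀:ℂ)))
          simpa using this
        have hx₀0 : 0 < x₀ := lt_of_lt_of_le one_pos hx₀1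
        have h5 : ((g ((x₀:ℂ))).re / x₀) * (x - x₀) ≤ ε' * x := by
          have h6 : (g ((x₀:ℂ))).re / x₀ ≤ ε' := hx₀ε.le
          have h7 : 0 ≤ (g ((x₀:ℂ))).re / x₀ := div_nonneg (hgre _ (by simp [hx₀0])) hx₀0.le
          calc ((g ((x₀:ℂ))).re / x₀) * (x - x₀) ≤ ε' * (x - x₀) := by
                apply mul_le_mul_of_nonneg_right h6
                linarith
            _ ≤ ε' * x := by nlinarith
        linarith
      have h8 : Complex.abs (g ((x₀:ℂ))) ≤ ε' * (x - 1) := by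
        have h9 : Complex.abs (g ((x₀:ℂ))) / ε' + 1 ≤ x := le_trans (le_max_right _ _) hζR
        have h10 : Complex.abs (g ((x₀:ℂ))) / ε' ≤ x - 1 := by linarith
        calc Complex.abs (g ((x₀:ℂ))) = (Complex.abs (g ((x₀:ℂ))) / ε') * ε' := by
              field_simp
          _ ≤ (x - 1) * ε' := mul_le_mul_of_nonneg_right h10 hε'.le
          _ = ε' * (x - 1) := by ring
      have h11 : Complex.abs (g ζ) ≤ ε' * x * ((2*k+4)/k) := by
        calc Complex.abs (g ζ) ≤ Complex.abs (g ((x:ℂ))) + D := by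
              have := Complex.abs.add_le (g ((x:ℂ))) (g ζ - g ((x:ℂ)))
              simp only [add_sub_cancel] at this
              linarith [this]
          _ ≤ (Complex.abs (g ((x₀:ℂ))) + ε' * x) + 4 * Rgx / k := by linarith
          _ ≤ (ε' * (x-1) + ε' * x) + 4 * (ε' * x) / k := by
              have h12 : 4 * Rgx / k ≤ 4 * (ε' * x) / k := by gcongr
              linarith
          _ ≤ 2*(ε' * x) + 4 * (ε' * x) / k := by nlinarith
          _ = ε' * x * ((2*k+4)/k) := by field_simp
      rw [div_le_iff₀ hx0]
      calc Complex.abs (g ζ) ≤ ε' * x * ((2*k+4)/k) := h11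
        _ ≤ ε' * x * Cβ := by
            apply mul_le_mul_of_nonneg_left _ (by positivity)
            rw [hCβdef]
            have h13 : 0 ≤ (k+4)/k^2 := by positivity
            linarith
        _ = ε' * Cβ * x := by ring
  -- conclude
  have habsfact : ∀ R : ℝ, {ζ : ℂ | R ≤ Complex.abs ζ} ∈ comap Complex.abs atTop := by
    intro R
    exact preimage_mem_comap (Ici_mem_atTop R)
  refine ⟨c, hc0, ?_, ?_⟩
  · rw [Metric.tendsto_nhds]
    intro ε hε
    have hε' : 0 < ε / (2*Cβ) := by positivity
    obtain ⟨R, hR1, hkey⟩ := hmain _ hε'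
    rw [eventually_inf_principal]
    filter_upwards [habsfact R] with ζ hζR hζS
    have h1 := (hkey ζ hζR hζS).1
    rw [Complex.dist_eq]
    calc Complex.abs (deriv ψ ζ - (c:ℂ)) ≤ (ε/(2*Cβ)) * Cβ := h1
      _ = ε/2 := by field_simp
      _ < ε := by linarith
  · rw [Metric.tendsto_nhds]
    intro ε hε
    have hε' : 0 < ε / (2*Cβ) := by positivity
    obtain ⟨R, hR1, hkey⟩ := hmain _ hε'
    rw [eventually_inf_principal]
    filter_upwards [habsfact R] with ζ hζR hζS
    have h1 := (hkey ζ hζR hζS).2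
    rw [Complex.dist_eq]
    calc Complex.abs (ψ ζ / ζ - (c:ℂ)) ≤ (ε/(2*Cβ)) * Cβ := h1
      _ = ε/2 := by field_simp
      _ < ε := by linarith
end
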